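/- Let (ψ_j)_{j∈J} be a C-controlled K-frame for a Hilbert space H with bounds A and B. Let M, K be bounded operators with R(M) ⊆ R(K) and C commuting with both M and K. Then (ψ_j) is a C-controlled M-frame for H with bounds A/λ' and B, where λ' > 0 satisfies M M* ≤ λ' K K* (such λ' exists by Douglas' theorem). -/

import Mathlib

open ContinuousLinearMap
open scoped ComplexOrder

open Filter Topology in
/-- Douglas' lemma (norm-of-adjoint form). -/
theorem douglas_aux {H : Type*} [NormedAddCommGroup H] [InnerProductSpace ℂ H]
    [CompleteSpace H] (M K : H →L[ℂ] H) (hrange : Set.range M ⊆ Set.range K) :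
    ∃ lam > (0 : ℝ), ∀ f : H, ‖adjoint M f‖ ≤ lam * ‖adjoint K f‖ := by
  haveI : CompleteSpace (LinearMap.ker (K : H →ₗ[ℂ] H)) :=
    by exact (ContinuousLinearMap.isClosed_ker K).completeSpace_coe
  have hproj : ∀ p : H,
      K ((Submodule.orthogonalProjectionOnto (LinearMap.ker (K : H →ₗ[ℂ] H))ᗮ p : H)) = K p := by
    intro p
    have hmem : p - Submodule.orthogonalProjectionOnto (LinearMap.ker (K : H →ₗ[ℂ] H))ᗮ p ∈ ((LinearMap.ker (K : H →ₗ[ℂ] H))ᗮ)ᗮ :=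
      Submodule.sub_starProjection_mem_orthogonal p
    rw [Submodule.orthogonal_orthogonal] at hmem
    have h0 : K (p - Submodule.orthogonalProjectionOnto (LinearMap.ker (K : H →ₗ[ℂ] H))ᗮ p) = 0 := hmem
    rw [map_sub, sub_eq_zero] at h0
    exact h0.symm
  have hEU : ∀ f : H, ∃! q : (LinearMap.ker (K : H →ₗ[ℂ] H))ᗮ, K q = M f := by
    intro f
    obtain ⟨p, hp⟩ := hrange ⟨f, rfl⟩
    refine ⟨Submodule.orthogonalProjectionOnto (LinearMap.ker (K : H →ₗ[ℂ] H))ᗮ p, (hproj p).trans hp, ?_⟩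
    rintro q hKq
    have hker : ((q : H) - (Submodule.orthogonalProjectionOnto (LinearMap.ker (K : H →ₗ[ℂ] H))ᗮ p : H))
        ∈ LinearMap.ker (K : H →ₗ[ℂ] H) := by
      simp only [LinearMap.mem_ker, ContinuousLinearMap.coe_coe, map_sub, hKq, hproj, hp, sub_self]
    have hmem2 : ((q : H) - (Submodule.orthogonalProjectionOnto (LinearMap.ker (K : H →ₗ[ℂ] H))ᗮ p : H))
        ∈ (LinearMap.ker (K : H →ₗ[ℂ] H))ᗮ :=
      Submodule.sub_mem _ q.2 (Submodule.orthogonalProjectionOnto (LinearMap.ker (K : H →ₗ[ℂ] H))ᗮ p).2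
    have hz : ((q : H) - (Submodule.orthogonalProjectionOnto (LinearMap.ker (K : H →ₗ[ℂ] H))ᗮ p : H)) = 0 := by
      have := hmem2 _ hker
      rwa [inner_self_eq_zero] at this
    exact Subtype.ext (by rwa [sub_eq_zero] at hz)
  have hgfK : ∀ f : H, K ((hEU f).exists.choose : H) = M f := fun f =>
    (hEU f).exists.choose_spec
  have hgfU : ∀ (f : H) (q : (LinearMap.ker (K : H →ₗ[ℂ] H))ᗮ), K q = M f →
      q = (hEU f).exists.choose := fun f q hq => (hEU f).unique hq (hgfK f)
  set g : H →ₗ[ℂ] (LinearMap.ker (K : H →ₗ[ℂ] H))ᗮ :=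
    { toFun := fun f => (hEU f).exists.choose
      map_add' := by
        intro a b
        refine (hgfU (a + b) ((hEU a).exists.choose + (hEU b).exists.choose) ?_).symm
        push_cast
        rw [map_add, hgfK, hgfK, map_add]
      map_smul' := by
        intro c a
        refine (hgfU (c • a) (c • (hEU a).exists.choose) ?_).symm
        push_cast
        rw [map_smul, hgfK, map_smul] } with hg
  have hgK : ∀ f : H, K (g f : H) = M f := hgfK
  have hgU : ∀ (f : H) (q : (LinearMap.ker (K : H →ₗ[ℂ] H))ᗮ), K q = M f → q = g f := hgfU
  have hclosed : ∀ (u : ℕ → H) (x : H) (y : (LinearMap.ker (K : H →ₗ[ℂ] H))ᗮ),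
      Tendsto u atTop (𝓝 x) → Tendsto (g ∘ u) atTop (𝓝 y) → y = g x := by
    intro u x y hux hgy
    have h1 : Tendsto (fun n => K ((g (u n) : H))) atTop (𝓝 (K y)) :=
      (K.continuous.comp continuous_subtype_val).continuousAt.tendsto.comp hgy
    have h2 : Tendsto (fun n => M (u n)) atTop (𝓝 (M x)) :=
      M.continuous.continuousAt.tendsto.comp hux
    have heq : (fun n => K ((g (u n) : H))) = fun n => M (u n) := by
      funext n; exact hgK (u n)
    rw [heq] at h1
    exact hgU x y (tendsto_nhds_unique h1 h2)
  set Y : H →L[ℂ] H :=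
    ((LinearMap.ker (K : H →ₗ[ℂ] H))ᗮ).subtypeL.comp (ContinuousLinearMap.ofSeqClosedGraph hclosed)
    with hYdef
  have hKY : K.comp Y = M := by
    ext f
    have hXf : (ContinuousLinearMap.ofSeqClosedGraph hclosed) f = g f := rfl
    simp only [hYdef, ContinuousLinearMap.comp_apply, Submodule.subtypeL_apply, hXf]
    exact hgK f
  refine ⟨‖adjoint Y‖ + 1, by positivity, fun f => ?_⟩
  have hadj : adjoint M = (adjoint Y).comp (adjoint K) := by
    rw [← hKY, ContinuousLinearMap.adjoint_comp]
  rw [hadj]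
  calc ‖(adjoint Y) ((adjoint K) f)‖ ≤ ‖adjoint Y‖ * ‖adjoint K f‖ :=
        (adjoint Y).le_opNorm _
    _ ≤ (‖adjoint Y‖ + 1) * ‖adjoint K f‖ :=
        mul_le_mul_of_nonneg_right (by linarith) (norm_nonneg _)

set_option maxHeartbeats 1000000 in
/-- If `(ψ_j)` is a `C`-controlled `K`-frame with bounds `A, B`, `R(M) ⊆ R(K)` and `C`
commutes with `M` and `K`, then `(ψ_j)` is a `C`-controlled `M`-frame with bounds
`A/λ'` and `B`, where `λ' > 0` satisfies `M M* ≤ λ' K K*`. -/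
theorem stmt_11 {H : Type*} [NormedAddCommGroup H] [InnerProductSpace ℂ H] [CompleteSpace H]
    {J : Type*} [Countable J] (C K M sqrtC : H →L[ℂ] H) (ψ : J → H)
    (hC : C.IsPositive) (hCinv : IsUnit C)
    (hcommK : K * C = C * K) (hcommM : M * C = C * M)
    (hsqrtC_pos : sqrtC.IsPositive) (hsqrtC_sq : sqrtC * sqrtC = C)
    (hrange : Set.range M ⊆ Set.range K)
    (A B : ℝ) (hA : 0 < A) (hAB : A ≤ B)
    (hsum : ∀ f : H, Summable fun j => (inner ℂ f (ψ j) : ℂ) * (inner ℂ (C (ψ j)) f : ℂ))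
    (hframe : ∀ f : H,
      (A : ℂ) * inner ℂ (sqrtC (adjoint K f)) (sqrtC (adjoint K f)) ≤
          ∑' j, (inner ℂ f (ψ j) : ℂ) * (inner ℂ (C (ψ j)) f : ℂ) ∧
        (∑' j, (inner ℂ f (ψ j) : ℂ) * (inner ℂ (C (ψ j)) f : ℂ)) ≤ (B : ℂ) * inner ℂ f f) :
    ∃ lam > (0 : ℝ),
      (lam • (K * adjoint K) - M * adjoint M).IsPositive ∧
        ∀ f : H,
          ((A / lam : ℝ) : ℂ) * inner ℂ (sqrtC (adjoint M f)) (sqrtC (adjoint M f)) ≤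
              ∑' j, (inner ℂ f (ψ j) : ℂ) * (inner ℂ (C (ψ j)) f : ℂ) ∧
            (∑' j, (inner ℂ f (ψ j) : ℂ) * (inner ℂ (C (ψ j)) f : ℂ)) ≤ (B : ℂ) * inner ℂ f f := by
  -- sqrtC is surjective
  obtain ⟨u, hu⟩ := hCinv
  have hsurj : Function.Surjective sqrtC := by
    intro y
    refine ⟨(sqrtC.comp (↑u⁻¹ : H →L[ℂ] H)) y, ?_⟩
    have h1 : sqrtC.comp (sqrtC.comp (↑u⁻¹ : H →L[ℂ] H)) = 1 := by
      have : sqrtC.comp sqrtC = C := hsqrtC_sq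
      rw [← ContinuousLinearMap.comp_assoc, this]
      have : C.comp (↑u⁻¹ : H →L[ℂ] H) = (↑u : H →L[ℂ] H) * ↑u⁻¹ := by rw [hu]; rfl
      rw [this, u.mul_inv]
    calc sqrtC ((sqrtC.comp (↑u⁻¹ : H →L[ℂ] H)) y)
        = (sqrtC.comp (sqrtC.comp (↑u⁻¹ : H →L[ℂ] H))) y := rfl
      _ = y := by rw [h1]; rfl
  have hrange2 : Set.range (M.comp sqrtC) ⊆ Set.range (K.comp sqrtC) := by
    have hM : Set.range (⇑(M.comp sqrtC)) = Set.range M := by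
      rw [ContinuousLinearMap.coe_comp', Set.range_comp, hsurj.range_eq, Set.image_univ]
    have hK : Set.range (⇑(K.comp sqrtC)) = Set.range K := by
      rw [ContinuousLinearMap.coe_comp', Set.range_comp, hsurj.range_eq, Set.image_univ]
    rw [hM, hK]; exact hrange
  obtain ⟨lam₁, hl1, h1⟩ := douglas_aux M K hrange
  obtain ⟨lam₂, hl2, h2⟩ := douglas_aux (M.comp sqrtC) (K.comp sqrtC) hrange2
  have hadj_sqrt : adjoint sqrtC = sqrtC := by
    rw [← ContinuousLinearMap.star_eq_adjoint]; exact hsqrtC_pos.isSelfAdjoint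
  have h2' : ∀ f : H, ‖sqrtC (adjoint M f)‖ ≤ lam₂ * ‖sqrtC (adjoint K f)‖ := by
    intro f
    have := h2 f
    rwa [ContinuousLinearMap.adjoint_comp, ContinuousLinearMap.adjoint_comp,
      hadj_sqrt, ContinuousLinearMap.comp_apply, ContinuousLinearMap.comp_apply] at this
  set lam : ℝ := max (lam₁ ^ 2) (lam₂ ^ 2) with hlamdef
  have hlam : 0 < lam := lt_max_of_lt_left (by positivity)
  refine ⟨lam, hlam, ?_, ?_⟩
  · -- positivity of lam • K K* - M M*
    constructor
    · have hKK : IsSelfAdjoint (K * adjoint K) := by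
        rw [IsSelfAdjoint, star_mul, ContinuousLinearMap.star_eq_adjoint,
          ContinuousLinearMap.star_eq_adjoint, ContinuousLinearMap.adjoint_adjoint]
      have hMM : IsSelfAdjoint (M * adjoint M) := by
        rw [IsSelfAdjoint, star_mul, ContinuousLinearMap.star_eq_adjoint,
          ContinuousLinearMap.star_eq_adjoint, ContinuousLinearMap.adjoint_adjoint]
      have hsm : IsSelfAdjoint (lam • (K * adjoint K)) := by
        rw [IsSelfAdjoint, star_smul, star_trivial, hKK.star_eq]
      exact (hsm.sub hMM).isSymmetric
    · intro f
      have hKf : (inner ℂ ((K * adjoint K) f) f : ℂ) = (‖adjoint K f‖ : ℂ) ^ 2 := by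
        rw [ContinuousLinearMap.mul_apply, ← ContinuousLinearMap.adjoint_inner_right K,
          inner_self_eq_norm_sq_to_K]
        norm_cast
      have hMf : (inner ℂ ((M * adjoint M) f) f : ℂ) = (‖adjoint M f‖ : ℂ) ^ 2 := by
        rw [ContinuousLinearMap.mul_apply, ← ContinuousLinearMap.adjoint_inner_right M,
          inner_self_eq_norm_sq_to_K]
        norm_cast
      have hkey : ‖adjoint M f‖ ^ 2 ≤ lam * ‖adjoint K f‖ ^ 2 := by
        have := h1 f
        have h1sq : ‖adjoint M f‖ ^ 2 ≤ lam₁ ^ 2 * ‖adjoint K f‖ ^ 2 := by nlinarith [norm_nonneg (adjoint M f), norm_nonneg (adjoint K f)]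
        have : lam₁ ^ 2 * ‖adjoint K f‖ ^ 2 ≤ lam * ‖adjoint K f‖ ^ 2 :=
          mul_le_mul_of_nonneg_right (le_max_left _ _) (by positivity)
        linarith
      have : ContinuousLinearMap.reApplyInnerSelf
          (lam • (K * adjoint K) - M * adjoint M) f
          = lam * ‖adjoint K f‖ ^ 2 - ‖adjoint M f‖ ^ 2 := by
        rw [ContinuousLinearMap.reApplyInnerSelf_apply, ContinuousLinearMap.sub_apply,
          ContinuousLinearMap.smul_apply, inner_sub_left,
          show lam • ((K * adjoint K) f) = (lam : ℂ) • ((K * adjoint K) f) from rfl,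
          inner_smul_left, hKf, hMf]
        simp [← Complex.ofReal_pow]
      rw [this]
      linarith
  · intro f
    refine ⟨?_, (hframe f).2⟩
    have hkey : A / lam * ‖sqrtC (adjoint M f)‖ ^ 2 ≤ A * ‖sqrtC (adjoint K f)‖ ^ 2 := by
      have hh := h2' f
      have hsq : ‖sqrtC (adjoint M f)‖ ^ 2 ≤ lam * ‖sqrtC (adjoint K f)‖ ^ 2 := by
        have h1sq : ‖sqrtC (adjoint M f)‖ ^ 2 ≤ lam₂ ^ 2 * ‖sqrtC (adjoint K f)‖ ^ 2 := by
          nlinarith [norm_nonneg (sqrtC (adjoint M f)), norm_nonneg (sqrtC (adjoint K f))]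
        have : lam₂ ^ 2 * ‖sqrtC (adjoint K f)‖ ^ 2 ≤ lam * ‖sqrtC (adjoint K f)‖ ^ 2 :=
          mul_le_mul_of_nonneg_right (le_max_right _ _) (by positivity)
        linarith
      rw [div_mul_eq_mul_div, div_le_iff₀ hlam]
      nlinarith
    calc ((A / lam : ℝ) : ℂ) * inner ℂ (sqrtC (adjoint M f)) (sqrtC (adjoint M f))
        ≤ (A : ℂ) * inner ℂ (sqrtC (adjoint K f)) (sqrtC (adjoint K f)) := by
          rw [inner_self_eq_norm_sq_to_K, inner_self_eq_norm_sq_to_K]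
          have : ((A / lam * ‖sqrtC (adjoint M f)‖ ^ 2 : ℝ) : ℂ)
              ≤ ((A * ‖sqrtC (adjoint K f)‖ ^ 2 : ℝ) : ℂ) := by
            exact_mod_cast hkey
          push_cast at this ⊢
          exact this
      _ ≤ ∑' j, (inner ℂ f (ψ j) : ℂ) * (inner ℂ (C (ψ j)) f : ℂ) := (hframe f).1
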